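/- Fix two points a, b in ℝ³ and define the triangle-area function f(x) = (1/2)·‖(a − x) × (b − x)‖. Let v be a point such that v, a, b are noncollinear, let α be the interior angle of the triangle [v, a, b] at the vertex a and β its interior angle at the vertex b. Then f is differentiable at v and its gradient at v equals (1/2)·( cot α · (v − b) + cot β · (v − a) ); equivalently, for every u ∈ ℝ³ the derivative of f at v in direction u equals ⟨(1/2)(cot α (v − b) + cot β (v − a)), u⟩. -/

import Mathlib

open Real InnerProductGeometry
open scoped RealInnerProductSpace

/-- The cross product on `ℝ³ = EuclideanSpace ℝ (Fin 3)`. -/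
noncomputable def cross3 (u v : EuclideanSpace ℝ (Fin 3)) : EuclideanSpace ℝ (Fin 3) :=
  (EuclideanSpace.equiv (Fin 3) ℝ).symm
    (crossProduct ((EuclideanSpace.equiv (Fin 3) ℝ) u) ((EuclideanSpace.equiv (Fin 3) ℝ) v))

lemma inner_c3 (x y : EuclideanSpace ℝ (Fin 3)) : ⟪x, y⟫ = dotProduct (x : Fin 3 → ℝ) y := by
  rw [dotProduct]
  simp [PiLp.inner_apply, RCLike.inner_apply, mul_comm]

lemma inner_cross3 (u v w x : EuclideanSpace ℝ (Fin 3)) :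
    ⟪cross3 u v, cross3 w x⟫ = ⟪u,w⟫ * ⟪v,x⟫ - ⟪u,x⟫ * ⟪v,w⟫ := by
  simp only [inner_c3, cross3]
  exact cross_dot_cross _ _ _ _

lemma norm_cross3_sq (x y : EuclideanSpace ℝ (Fin 3)) :
    ‖cross3 x y‖ ^ 2 = ⟪x,x⟫ * ⟪y,y⟫ - ⟪x,y⟫ * ⟪x,y⟫ := by
  rw [← real_inner_self_eq_norm_sq, inner_cross3]
  rw [real_inner_comm y x]

lemma norm_cross3_eq_sin (x y : EuclideanSpace ℝ (Fin 3)) :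
    ‖cross3 x y‖ = Real.sin (angle x y) * (‖x‖ * ‖y‖) := by
  rw [sin_angle_mul_norm_mul_norm, ← norm_cross3_sq,
    Real.sqrt_sq (norm_nonneg _)]

lemma cot_angle_eq (x y : EuclideanSpace ℝ (Fin 3)) :
    Real.cot (angle x y) = ⟪x, y⟫ / ‖cross3 x y‖ := by
  rw [Real.cot_eq_cos_div_sin, norm_cross3_eq_sin, cos_angle, div_div]
  ring

-- bilinearity facts proved coordinatewise
lemma cross3_eq1 (a b x : EuclideanSpace ℝ (Fin 3)) :
    cross3 (a - x) (b - x) = cross3 (a - x) (b - a) := by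
  ext i; fin_cases i <;> simp [cross3, cross_apply] <;> ring

lemma cross3_eq2 (a b v : EuclideanSpace ℝ (Fin 3)) :
    cross3 (v - b) (a - b) = - cross3 (v - a) (b - a) := by
  ext i; fin_cases i <;> simp [cross3, cross_apply] <;> ring

lemma cross3_eq3 (a v c : EuclideanSpace ℝ (Fin 3)) :
    cross3 (a - v) c = - cross3 (v - a) c := by
  ext i; fin_cases i <;> simp [cross3, cross_apply] <;> ring

lemma cross3_sub_left (x y z : EuclideanSpace ℝ (Fin 3)) :
    cross3 (x - y) z = cross3 x z - cross3 y z := by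
  ext i; fin_cases i <;> simp [cross3, cross_apply] <;> ring

noncomputable def crossR (c : EuclideanSpace ℝ (Fin 3)) :
    EuclideanSpace ℝ (Fin 3) →L[ℝ] EuclideanSpace ℝ (Fin 3) :=
  LinearMap.toContinuousLinearMap
    { toFun := fun u => cross3 u c
      map_add' := by
        intro u v; ext i; fin_cases i <;> simp [cross3, cross_apply] <;> ring
      map_smul' := by
        intro r u; ext i; fin_cases i <;> simp [cross3, cross_apply] <;> ring }

lemma crossR_apply (c u : EuclideanSpace ℝ (Fin 3)) : crossR c u = cross3 u c := rfl


/-- The gradient of the triangle-area function `x ↦ (1/2)‖(a - x) × (b - x)‖` at a point `v`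
noncollinear with `a, b` is `(1/2)(cot α (v - b) + cot β (v - a))`, where `α`, `β` are the
interior angles of the triangle `[v, a, b]` at `a` and `b`. -/
theorem gradient_triangle_area (a b v : EuclideanSpace ℝ (Fin 3))
    (h : ¬ Collinear ℝ ({v, a, b} : Set (EuclideanSpace ℝ (Fin 3)))) :
    HasGradientAt (fun x => (1/2 : ℝ) * ‖cross3 (a - x) (b - x)‖)
      ((1/2 : ℝ) • (Real.cot (angle (v - a) (b - a)) • (v - b)
        + Real.cot (angle (v - b) (a - b)) • (v - a))) v := by
  classical
  set c : EuclideanSpace ℝ (Fin 3) := b - a with hc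
  set w : EuclideanSpace ℝ (Fin 3) := cross3 (v - a) c with hw
  set N : ℝ := ‖w‖ with hN
  -- positivity of N
  have hsin : Real.sin (angle (v - a) (b - a)) > 0 := by
    have := EuclideanGeometry.sin_pos_of_not_collinear (p₁ := v) (p₂ := a) (p₃ := b) h
    simpa [EuclideanGeometry.angle] using this
  have hva : v ≠ a := by
    rintro rfl
    apply h
    have : ({v, v, b} : Set (EuclideanSpace ℝ (Fin 3))) = {v, b} := by simp
    rw [this]; exact collinear_pair ℝ _ _
  have hba : b ≠ a := by
    rintro rfl
    apply h
    have : ({v, b, b} : Set (EuclideanSpace ℝ (Fin 3))) = {v, b} := by simp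
    rw [this]; exact collinear_pair ℝ _ _
  have hva' : v - a ≠ 0 := sub_ne_zero.2 hva
  have hba' : (b - a : EuclideanSpace ℝ (Fin 3)) ≠ 0 := sub_ne_zero.2 hba
  have hNpos : 0 < N := by
    rw [hN, hw, norm_cross3_eq_sin]
    have h2 : (0:ℝ) < ‖v - a‖ * ‖(c : EuclideanSpace ℝ (Fin 3))‖ :=
      mul_pos (norm_pos_iff.2 hva') (norm_pos_iff.2 hba')
    exact mul_pos (by rw [hc]; exact hsin) h2
  have hNne : N ≠ 0 := ne_of_gt hNpos
  -- rewrite the function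
  have hfun : (fun x => (1/2 : ℝ) * ‖cross3 (a - x) (b - x)‖)
      = fun x => (1/2 : ℝ) * Real.sqrt (‖cross3 a c - crossR c x‖ ^ 2) := by
    funext x
    rw [Real.sqrt_sq (norm_nonneg _), cross3_eq1, crossR_apply, ← cross3_sub_left, ← hc]
  have h1 : HasFDerivAt (fun x => cross3 a c - crossR c x) (-(crossR c)) v := by
    exact ((hasFDerivAt_const (cross3 a c) v).sub (crossR c).hasFDerivAt).congr_fderiv (zero_sub _)
  have h2 := h1.norm_sq
  set w' : EuclideanSpace ℝ (Fin 3) := cross3 a c - crossR c v with hw'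
  have hww : w' = -w := by
    rw [hw', crossR_apply, ← cross3_sub_left, hw, ← cross3_eq3, hc]
  have hq : (‖w'‖^2 : ℝ) ≠ 0 := by
    rw [hww, norm_neg, ← hN]; positivity
  have h3 : HasDerivAt Real.sqrt (1 / (2 * Real.sqrt (‖w'‖^2))) (‖w'‖^2) :=
    Real.hasDerivAt_sqrt hq
  have h4 := h3.comp_hasFDerivAt v h2
  have h5 := h4.const_mul (1/2 : ℝ)
  rw [hasGradientAt_iff_hasFDerivAt, hfun]
  convert h5 using 1
  · rfl
  · rfl
  ext u
  have hsqrt : Real.sqrt (‖w'‖^2) = N := by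
    rw [hww, norm_neg, Real.sqrt_sq (norm_nonneg _), hN]
  have hinner : ⟪w', -(cross3 u c)⟫ = ⟪v - a, u⟫ * ⟪c, c⟫ - ⟪v - a, c⟫ * ⟪c, u⟫ := by
    rw [hww, hw, inner_neg_neg, inner_cross3]
  have hcota : Real.cot (angle (v - a) c) = ⟪v - a, c⟫ / N := by
    rw [cot_angle_eq, ← hw, ← hN]
  have hcotb : Real.cot (angle (v - b) (a - b)) = (⟪c, c⟫ - ⟪v - a, c⟫) / N := by
    rw [cot_angle_eq, cross3_eq2, norm_neg, ← hc, ← hw, ← hN]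
    congr 1
    rw [show v - b = (v - a) - c from by rw [hc]; abel,
      show a - b = -c from by rw [hc]; abel,
      inner_neg_right, inner_sub_left]
    ring
  have hvb : ⟪v - b, u⟫ = ⟪v - a, u⟫ - ⟪c, u⟫ := by
    rw [show v - b = (v - a) - c from by rw [hc]; abel, inner_sub_left]
  simp only [InnerProductSpace.toDual_apply_apply, ContinuousLinearMap.smul_apply,
    ContinuousLinearMap.comp_apply, ContinuousLinearMap.neg_apply, innerSL_apply_apply,
    crossR_apply, hsqrt, smul_eq_mul, nsmul_eq_mul]
  rw [hinner, real_inner_smul_left, inner_add_left, real_inner_smul_left,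
    real_inner_smul_left, hcota, hcotb, hvb]
  field_simp
  ring
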